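/- The number of unordered pairs of non-crossing diagonals of a convex n-gon equals (1/3) · C(n-3,2) · C(n+1,2), i.e., S = (n-3)(n-4)(n+1)n/12. -/

import Mathlib

open scoped Classical

/-- Diagonals of a convex `n`-gon with vertices `1,…,n`, encoded as pairs `(k,l)` with
`k < l`, `l - k ≥ 2`, and `(k,l) ≠ (1,n)`. -/
def diags (n : ℕ) : Finset (ℕ × ℕ) :=
  ((Finset.Icc 1 n) ×ˢ (Finset.Icc 1 n)).filter
    (fun p => p.1 < p.2 ∧ 2 ≤ p.2 - p.1 ∧ ¬(p.1 = 1 ∧ p.2 = n))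

/-- Two diagonals of a convex polygon cross (their interiors intersect) iff their
endpoints interlace around the polygon. -/
def cross (d e : ℕ × ℕ) : Prop :=
  (d.1 < e.1 ∧ e.1 < d.2 ∧ d.2 < e.2) ∨ (e.1 < d.1 ∧ d.1 < e.2 ∧ e.2 < d.2)

lemma two_mul_card_filter {α : Type*} [DecidableEq α] (s : Finset α) (r : α → α → Prop)
    [DecidableRel r]
    (hne : ∀ a b : α, a ≠ b → (r a b ∨ r b a)) (hasymm : ∀ a b : α, r a b → ¬ r b a) :
    ((s ×ˢ s).filter (fun p => r p.1 p.2)).card * 2 + s.card = s.card * s.card := by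
  have hswap : ((s ×ˢ s).filter (fun p => r p.1 p.2)).card
      = ((s ×ˢ s).filter (fun p => r p.2 p.1)).card := by
    apply Finset.card_bij' (fun p _ => Prod.swap p) (fun p _ => Prod.swap p) <;>
      simp [Finset.mem_filter, Finset.mem_product] <;> tauto
  have hunion : (s ×ˢ s).filter (fun p => r p.1 p.2 ∨ r p.2 p.1) = s.offDiag := by
    ext p
    simp only [Finset.mem_filter, Finset.mem_product, Finset.mem_offDiag]
    constructor
    · rintro ⟨⟨h1, h2⟩, h3⟩
      refine ⟨h1, h2, fun he => ?_⟩
      rcases h3 with h | h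
      · exact hasymm _ _ h (he ▸ h)
      · exact hasymm _ _ h (he ▸ h)
    · rintro ⟨h1, h2, h3⟩
      exact ⟨⟨h1, h2⟩, hne _ _ h3⟩
  have hdisj : Disjoint ((s ×ˢ s).filter (fun p => r p.1 p.2))
      ((s ×ˢ s).filter (fun p => r p.2 p.1)) := by
    apply Finset.disjoint_filter_filter'
    rw [disjoint_iff_inf_le]
    intro p hp
    exact absurd hp.1 (by simpa using fun h => hasymm _ _ h hp.2)
  have hoff := Finset.offDiag_card s
  have hle : s.card ≤ s.card * s.card := by
    rcases Nat.eq_zero_or_pos s.card with h | h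
    · simp [h]
    · exact Nat.le_mul_of_pos_left _ h
  rw [Finset.filter_or] at hunion
  have := congrArg Finset.card hunion
  rw [Finset.card_union_of_disjoint hdisj, ← hswap] at this
  omega

lemma diags_card (n : ℕ) (hn : 3 ≤ n) : (diags n).card * 2 + 3 * n = n * n := by
  set T := ((Finset.Icc 1 n) ×ˢ (Finset.Icc 1 n)).filter (fun p : ℕ × ℕ => p.1 < p.2) with hT
  have hTcard : T.card * 2 + n = n * n := by
    have := two_mul_card_filter (Finset.Icc 1 n) (· < ·)
      (fun a b h => by omega) (fun a b h => by omega)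
    simpa [Nat.card_Icc] using this
  set E : Finset (ℕ × ℕ) := insert (1, n) ((Finset.Icc 1 (n-1)).image fun k => (k, k+1)) with hE
  have hEcard : E.card = n := by
    rw [hE, Finset.card_insert_of_notMem, Finset.card_image_of_injective _
      (fun a b h => by simpa using (Prod.mk.injEq _ _ _ _ ▸ h).1)]
    · rw [Nat.card_Icc]; omega
    · simp only [Finset.mem_image, Finset.mem_Icc, Prod.mk.injEq]
      rintro ⟨k, hk, rfl, h2⟩
      omega
  have hsub : E ⊆ T := by
    rw [hE, hT]
    intro p hp
    simp only [Finset.mem_insert, Finset.mem_image, Finset.mem_Icc, Prod.mk.injEq] at hp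
    simp only [Finset.mem_filter, Finset.mem_product, Finset.mem_Icc]
    rcases hp with rfl | ⟨k, hk, rfl⟩
    · omega
    · simp; omega
  have hD : diags n = T \ E := by
    ext ⟨a, b⟩
    simp only [diags, hT, hE, Finset.mem_sdiff, Finset.mem_filter, Finset.mem_product,
      Finset.mem_Icc, Finset.mem_insert, Finset.mem_image, Prod.mk.injEq, not_or, not_exists,
      not_and]
    constructor
    · rintro ⟨⟨ha, hb⟩, hlt, hge, hne⟩
      refine ⟨⟨⟨ha, hb⟩, hlt⟩, ?_, ?_⟩
      · intro h1; omega
      · intro k hk h1 h2; omega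
    · rintro ⟨⟨⟨ha, hb⟩, hlt⟩, h1, h2⟩
      refine ⟨⟨ha, hb⟩, hlt, ?_, ?_⟩
      · by_contra hc
        have hb1 : b = a + 1 := by omega
        have := h2 a ⟨by omega, by omega⟩ rfl
        omega
      · intro hc hc2
        exact h1 hc hc2
  rw [hD, Finset.card_sdiff_of_subset hsub, hEcard]
  have : E.card ≤ T.card := Finset.card_le_card hsub
  omega

lemma mem_crossSet (n : ℕ) (p : (ℕ × ℕ) × (ℕ × ℕ)) :
    p ∈ ((diags n) ×ˢ (diags n)).filter
      (fun p => (p.1.1 < p.2.1 ∨ (p.1.1 = p.2.1 ∧ p.1.2 < p.2.2)) ∧ cross p.1 p.2) ↔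
    1 ≤ p.1.1 ∧ p.1.1 < p.2.1 ∧ p.2.1 < p.1.2 ∧ p.1.2 < p.2.2 ∧ p.2.2 ≤ n := by
  simp only [Finset.mem_filter, Finset.mem_product, diags, Finset.mem_Icc]
  simp only [cross]
  omega

lemma cross_card (n : ℕ) (hn : 3 ≤ n) :
    (((diags n) ×ˢ (diags n)).filter
      (fun p => (p.1.1 < p.2.1 ∨ (p.1.1 = p.2.1 ∧ p.1.2 < p.2.2)) ∧ cross p.1 p.2)).card
      = n.choose 4 := by
  have hgoal : (((diags n) ×ˢ (diags n)).filter
      (fun p => (p.1.1 < p.2.1 ∨ (p.1.1 = p.2.1 ∧ p.1.2 < p.2.2)) ∧ cross p.1 p.2)).card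
      = ((Finset.Icc 1 n).powersetCard 4).card := by
    apply Finset.card_bij (fun p _ => ({p.1.1, p.2.1, p.1.2, p.2.2} : Finset ℕ))
    · intro p hp
      rw [mem_crossSet] at hp
      rw [Finset.mem_powersetCard]
      constructor
      · intro x hx
        simp only [Finset.mem_insert, Finset.mem_singleton] at hx
        rw [Finset.mem_Icc]
        omega
      · rw [Finset.card_insert_of_notMem (by simp; omega),
          Finset.card_insert_of_notMem (by simp; omega),
          Finset.card_insert_of_notMem (by simp; omega), Finset.card_singleton]
    · rintro ⟨⟨a, c⟩, b, d⟩ hp ⟨⟨a', c'⟩, b', d'⟩ hq h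
      rw [mem_crossSet] at hp hq
      simp only at hp hq h ⊢
      have h1 : a = a' ∨ a = b' ∨ a = c' ∨ a = d' := by
        have := Finset.ext_iff.mp h a; simp at this; tauto
      have h2 : b = a' ∨ b = b' ∨ b = c' ∨ b = d' := by
        have := Finset.ext_iff.mp h b; simp at this; tauto
      have h3 : c = a' ∨ c = b' ∨ c = c' ∨ c = d' := by
        have := Finset.ext_iff.mp h c; simp at this; tauto
      have h4 : d = a' ∨ d = b' ∨ d = c' ∨ d = d' := by
        have := Finset.ext_iff.mp h d; simp at this; tauto
      have h5 : a' = a ∨ a' = b ∨ a' = c ∨ a' = d := by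
        have := Finset.ext_iff.mp h a'; simp at this; tauto
      have h6 : b' = a ∨ b' = b ∨ b' = c ∨ b' = d := by
        have := Finset.ext_iff.mp h b'; simp at this; tauto
      have h7 : c' = a ∨ c' = b ∨ c' = c ∨ c' = d := by
        have := Finset.ext_iff.mp h c'; simp at this; tauto
      have h8 : d' = a ∨ d' = b ∨ d' = c ∨ d' = d := by
        have := Finset.ext_iff.mp h d'; simp at this; tauto
      simp only [Prod.mk.injEq]
      omega
    · intro s hs
      rw [Finset.mem_powersetCard] at hs
      obtain ⟨hsub, hcard⟩ := hs
      have hlen : (s.sort (· ≤ ·)).length = 4 := by rw [Finset.length_sort, hcard]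
      have hsorted : (s.sort (· ≤ ·)).Pairwise (· < ·) := (Finset.sortedLT_sort s).pairwise
      have hmem : ∀ x, x ∈ s ↔ x ∈ s.sort (· ≤ ·) := fun x => (Finset.mem_sort _).symm
      rcases hl : s.sort (· ≤ ·) with _ | ⟨a, _ | ⟨b, _ | ⟨c, _ | ⟨d, tl⟩⟩⟩⟩ <;>
        rw [hl] at hlen <;> simp at hlen
      subst hlen
      rw [hl] at hsorted hmem
      obtain ⟨ha1, hrest⟩ := List.pairwise_cons.mp hsorted
      obtain ⟨hb1, hrest2⟩ := List.pairwise_cons.mp hrest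
      obtain ⟨hc1, -⟩ := List.pairwise_cons.mp hrest2
      have hab : a < b := ha1 b (by simp)
      have hbc : b < c := hb1 c (by simp)
      have hcd : c < d := hc1 d (by simp)
      have hbounds : ∀ x, x ∈ s → 1 ≤ x ∧ x ≤ n := by
        intro x hx; have := hsub hx; rw [Finset.mem_Icc] at this; exact this
      have ha' := hbounds a ((hmem a).mpr (by simp))
      have hd' := hbounds d ((hmem d).mpr (by simp))
      refine ⟨((a, c), (b, d)), ?_, ?_⟩
      · rw [mem_crossSet]
        simp only
        omega
      · ext x
        simp only [Finset.mem_insert, Finset.mem_singleton, hmem x, List.mem_cons,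
          List.not_mem_nil, or_false]
  rw [hgoal, Finset.card_powersetCard, Nat.card_Icc]
  norm_num

/-- The number of unordered pairs of distinct non-crossing diagonals of a convex
`n`-gon equals `(1/3)·C(n-3,2)·C(n+1,2) = (n-3)(n-4)(n+1)n/12`.  Unordered pairs are
encoded as ordered pairs `(d,e)` with `d` lexicographically before `e`. -/
theorem stmt2 (n : ℕ) (hn : 3 ≤ n) :
    (((diags n) ×ˢ (diags n)).filter
      (fun p => (p.1.1 < p.2.1 ∨ (p.1.1 = p.2.1 ∧ p.1.2 < p.2.2)) ∧ ¬ cross p.1 p.2)).card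
      = (n - 3) * (n - 4) * (n + 1) * n / 12 := by
  by_cases h3 : n = 3
  · subst h3
    have hd : diags 3 = ∅ := by
      ext ⟨a, b⟩
      simp only [diags, Finset.mem_filter, Finset.mem_product, Finset.mem_Icc,
        Finset.notMem_empty, iff_false]
      omega
    rw [hd]
    simp
  · obtain ⟨m, rfl⟩ : ∃ m, n = m + 4 := ⟨n - 4, by omega⟩
    clear h3 hn
    have hD := diags_card (m + 4) (by omega)
    have hcross := cross_card (m + 4) (by omega)
    have h24 : (((diags (m+4)) ×ˢ (diags (m+4))).filter
        (fun p => (p.1.1 < p.2.1 ∨ (p.1.1 = p.2.1 ∧ p.1.2 < p.2.2)) ∧ cross p.1 p.2)).card * 24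
        = (m+4)*(m+3)*(m+2)*(m+1) := by
      rw [hcross]
      have h := Nat.descFactorial_eq_factorial_mul_choose (m+4) 4
      have e1 : m+4-1 = m+3 := by omega
      have e2 : m+4-2 = m+2 := by omega
      have e3 : m+4-3 = m+1 := by omega
      have hdesc : (m+4).descFactorial 4 = (m+4)*(m+3)*(m+2)*(m+1) := by
        show (m+4-3) * ((m+4-2) * ((m+4-1) * ((m+4) * 1))) = _
        rw [e1, e2, e3]
        ring
      have hfac : Nat.factorial 4 = 24 := rfl
      rw [hdesc, hfac] at h
      linarith [h]
    have hlex := two_mul_card_filter (diags (m+4))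
      (fun d e : ℕ × ℕ => d.1 < e.1 ∨ (d.1 = e.1 ∧ d.2 < e.2))
      (fun a b h => by
        rcases a with ⟨a1, a2⟩; rcases b with ⟨b1, b2⟩
        simp only [ne_eq, Prod.mk.injEq] at h
        dsimp only
        omega)
      (fun a b h => by
        rcases a with ⟨a1, a2⟩; rcases b with ⟨b1, b2⟩
        dsimp only at h ⊢
        omega)
    set P := (diags (m+4)) ×ˢ (diags (m+4)) with hP
    set L := P.filter (fun p => p.1.1 < p.2.1 ∨ (p.1.1 = p.2.1 ∧ p.1.2 < p.2.2)) with hLdef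
    have hsplit : (P.filter
        (fun p => (p.1.1 < p.2.1 ∨ (p.1.1 = p.2.1 ∧ p.1.2 < p.2.2)) ∧ cross p.1 p.2)).card
        + (P.filter
        (fun p => (p.1.1 < p.2.1 ∨ (p.1.1 = p.2.1 ∧ p.1.2 < p.2.2)) ∧ ¬ cross p.1 p.2)).card
        = L.card := by
      rw [hLdef, ← Finset.filter_filter, ← Finset.filter_filter]
      exact Finset.card_filter_add_card_filter_not
        (fun p : (ℕ × ℕ) × (ℕ × ℕ) => cross p.1 p.2)
    have h1 : L.card * 2 + (diags (m+4)).card = (diags (m+4)).card * (diags (m+4)).card := hlex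
    have hq : (diags (m+4)).card * 2 = (m+4)*(m+1) := by
      have hid0 : (m+4)*(m+1) + 3*(m+4) = (m+4)*(m+4) := by ring
      linarith [hD, hid0]
    have h8 : L.card * 8 + ((m+4)*(m+1))*2 = ((m+4)*(m+1))*((m+4)*(m+1)) := by
      rw [← hq]
      calc L.card * 8 + ((diags (m+4)).card * 2) * 2
          = (L.card * 2 + (diags (m+4)).card) * 4 := by ring
        _ = ((diags (m+4)).card * (diags (m+4)).card) * 4 := by rw [h1]
        _ = ((diags (m+4)).card * 2) * ((diags (m+4)).card * 2) := by ring
    set N := (P.filter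
        (fun p => (p.1.1 < p.2.1 ∨ (p.1.1 = p.2.1 ∧ p.1.2 < p.2.2)) ∧ ¬ cross p.1 p.2)).card
      with hNdef
    have hid : ((m+1)*m*(m+5)*(m+4))*2 + (m+4)*(m+3)*(m+2)*(m+1) + ((m+4)*(m+1))*6
        = ((m+4)*(m+1))*((m+4)*(m+1))*3 := by ring
    have h12 : N * 12 = (m+1)*m*(m+5)*(m+4) := by linarith [hsplit, h8, h24, hid]
    have e1 : m+4-3 = m+1 := by omega
    have e2 : m+4-4 = m := by omega
    rw [e1, e2, ← h12, Nat.mul_div_cancel _ (by norm_num : (0:ℕ) < 12)]
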